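/- For vectors a,b of length n and c,d of length m over an alphabet of size q, the edit distance satisfies d_E(ac, bd) ≥ max{d_E(a,b), d_E(c,d)}, where ac denotes concatenation of a and c. -/

import Mathlib

/-- A single edit step: insert or delete one symbol. -/
def EditStep {α : Type*} (a b : List α) : Prop :=
  (∃ i x, b = a.insertIdx i x) ∨ (∃ i x, a = b.insertIdx i x)

/-- Edit distance: minimum number of insertions and deletions transforming `a` into `b`. -/
noncomputable def editDist {α : Type*} (a b : List α) : ℕ :=
  sInf {n : ℕ | ∃ f : ℕ → List α, f 0 = a ∧ f n = b ∧ ∀ i < n, EditStep (f i) (f (i + 1))}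

section Aux

variable {α : Type*}

/-- A path of `N` edit steps from `a` to `b`. -/
def PathN (N : ℕ) (a b : List α) : Prop :=
  ∃ f : ℕ → List α, f 0 = a ∧ f N = b ∧ ∀ i < N, EditStep (f i) (f (i + 1))

lemma editDist_le_of_pathN {N : ℕ} {a b : List α} (h : PathN N a b) : editDist a b ≤ N :=
  Nat.sInf_le h

lemma editStep_symm {a b : List α} (h : EditStep a b) : EditStep b a := h.symm

lemma pathN_refl (a : List α) : PathN 0 a a := ⟨fun _ => a, rfl, rfl, by omega⟩

lemma pathN_symm {N : ℕ} {a b : List α} (h : PathN N a b) : PathN N b a := by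
  obtain ⟨f, h0, hN, hs⟩ := h
  refine ⟨fun i => f (N - i), by simpa, by simpa, fun i hi => ?_⟩
  have h1 : N - i = (N - (i + 1)) + 1 := by omega
  have h2 := hs (N - (i + 1)) (by omega)
  show EditStep (f (N - i)) (f (N - (i + 1)))
  rw [h1]
  exact editStep_symm h2

lemma pathN_trans {N M : ℕ} {a b c : List α} (h1 : PathN N a b) (h2 : PathN M b c) :
    PathN (N + M) a c := by
  obtain ⟨f, f0, fN, fs⟩ := h1
  obtain ⟨g, g0, gM, gs⟩ := h2
  refine ⟨fun i => if i < N then f i else g (i - N), ?_, ?_, ?_⟩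
  · rcases Nat.eq_zero_or_pos N with h | h
    · subst h
      have hg : g 0 = a := by rw [g0, ← fN, f0]
      simpa using hg
    · simp [h, f0]
  · have : ¬ N + M < N := by omega
    simpa [this] using gM
  · intro i hi
    by_cases h : i < N
    · by_cases h' : i + 1 < N
      · simpa [h, h'] using fs i h
      · have hiN : i + 1 = N := by omega
        have : g (i + 1 - N) = f (i + 1) := by rw [hiN]; simp [g0, ← fN]
        simp only [h, if_pos, if_neg h', this]
        exact fs i h
    · have : ¬ i + 1 < N := by omega
      simp only [h, if_neg, this]
      have : i + 1 - N = (i - N) + 1 := by omega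
      rw [this]
      exact gs (i - N) (by omega)

lemma pathN_of_editStep {a b : List α} (h : EditStep a b) : PathN 1 a b := by
  refine ⟨fun i => if i = 0 then a else b, by simp, by simp, ?_⟩
  intro i hi
  have hi0 : i = 0 := by omega
  subst hi0
  simpa using h

lemma pathN_snoc {N : ℕ} {a b c : List α} (h : PathN N a b) (h2 : EditStep b c) :
    PathN (N + 1) a c := pathN_trans h (pathN_of_editStep h2)

lemma pathN_succ_iff {N : ℕ} {a b : List α} :
    PathN (N + 1) a b ↔ ∃ w, PathN N a w ∧ EditStep w b := by
  constructor
  · rintro ⟨f, f0, fN, fs⟩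
    exact ⟨f N, ⟨f, f0, rfl, fun i hi => fs i (by omega)⟩, fN ▸ fs N (by omega)⟩
  · rintro ⟨w, h1, h2⟩
    exact pathN_snoc h1 h2

/-- A path deleting `a` down to `[]`. -/
lemma pathN_to_nil (a : List α) : PathN a.length a [] := by
  refine ⟨fun i => a.drop i, by simp, by simp, fun i hi => ?_⟩
  right
  exact ⟨0, a[i], by rw [List.insertIdx_zero]; exact List.drop_eq_getElem_cons hi⟩

lemma pathN_exists (a b : List α) : PathN (a.length + b.length) a b :=
  pathN_trans (pathN_to_nil a) (pathN_symm (pathN_to_nil b))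

lemma pathN_editDist (a b : List α) : PathN (editDist a b) a b := by
  have h : {n : ℕ | PathN n a b}.Nonempty := ⟨a.length + b.length, pathN_exists a b⟩
  exact Nat.sInf_mem h

lemma editDist_triangle (a b c : List α) :
    editDist a c ≤ editDist a b + editDist b c :=
  editDist_le_of_pathN (pathN_trans (pathN_editDist a b) (pathN_editDist b c))

lemma editDist_symm (a b : List α) : editDist a b = editDist b a :=
  le_antisymm (editDist_le_of_pathN (pathN_symm (pathN_editDist b a)))
    (editDist_le_of_pathN (pathN_symm (pathN_editDist a b)))

lemma length_editStep {a b : List α} (h : EditStep a b) :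
    b.length ≤ a.length + 1 ∧ a.length ≤ b.length + 1 := by
  have key : ∀ (l : List α) (n : ℕ) (x : α),
      l.length ≤ (l.insertIdx n x).length ∧ (l.insertIdx n x).length ≤ l.length + 1 :=
    fun l n x => ⟨List.length_le_length_insertIdx (l := l) (x := x) (i := n), List.length_insertIdx_le_succ (l := l) (x := x) (i := n)⟩
  rcases h with ⟨i, x, rfl⟩ | ⟨i, x, rfl⟩
  · have := key a i x; omega
  · have := key b i x; omega

lemma length_pathN {N : ℕ} {a b : List α} (h : PathN N a b) :
    b.length ≤ a.length + N ∧ a.length ≤ b.length + N := by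
  induction N generalizing b with
  | zero =>
    obtain ⟨f, f0, fN, _⟩ := h
    have : a = b := f0 ▸ fN
    simp [this]
  | succ N ih =>
    obtain ⟨w, h1, h2⟩ := pathN_succ_iff.mp h
    have := ih h1
    have := length_editStep h2
    omega

/-- Appending on the right: path of length `t.length`. -/
lemma pathN_append_right (x t : List α) : PathN t.length x (x ++ t) := by
  refine ⟨fun i => x ++ t.take i, by simp, by simp, fun i hi => ?_⟩
  left
  refine ⟨x.length + i, t[i], ?_⟩
  have hl : (x ++ t.take i).length = x.length + i := by
    simp [List.length_take, Nat.min_eq_left (le_of_lt hi)]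
  show x ++ t.take (i + 1) = (x ++ t.take i).insertIdx (x.length + i) t[i]
  rw [← hl, List.insertIdx_length_self]
  rw [List.take_succ, List.getElem?_eq_getElem hi]
  simp
 
/-- Prepending on the left: path of length `t.length`. -/
lemma pathN_prepend (x t : List α) : PathN t.length x (t ++ x) := by
  refine ⟨fun i => t.drop (t.length - i) ++ x, by simp, by simp, fun i hi => ?_⟩
  left
  have hlt : t.length - (i + 1) < t.length := by omega
  refine ⟨0, t[t.length - (i+1)], ?_⟩
  rw [List.insertIdx_zero]
  have : t.drop (t.length - (i + 1)) = t[t.length - (i+1)] :: t.drop (t.length - (i+1) + 1) :=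
    List.drop_eq_getElem_cons hlt
  rw [show t.length - (i+1) + 1 = t.length - i by omega] at this
  show t.drop (t.length - (i + 1)) ++ x = t[t.length - (i+1)] :: (t.drop (t.length - i) ++ x)
  rw [this]
  simp

lemma insertIdx_append_left (u v : List α) (i : ℕ) (x : α) (h : i ≤ u.length) :
    (u ++ v).insertIdx i x = u.insertIdx i x ++ v := by
  induction u generalizing i with
  | nil =>
    have : i = 0 := by simpa using h
    subst this
    simp
  | cons a u ih =>
    cases i with
    | zero => simp
    | succ i => simp [ih i (by simpa using h)]

lemma insertIdx_append_right (u v : List α) (i : ℕ) (x : α) (h : u.length ≤ i) :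
    (u ++ v).insertIdx i x = u ++ v.insertIdx (i - u.length) x := by
  induction u generalizing i with
  | nil => simp
  | cons a u ih =>
    cases i with
    | zero => simp at h
    | succ i =>
      simp only [List.cons_append, List.insertIdx_succ_cons, List.length_cons]
      rw [ih i (by simpa using h), Nat.succ_sub_succ]

/-- Splitting an edit step across a concatenation boundary. -/
lemma editStep_split {u v w : List α} (h : EditStep (u ++ v) w) :
    ∃ u' v', w = u' ++ v' ∧ ((EditStep u u' ∧ v = v') ∨ (u = u' ∧ EditStep v v')) := by
  rcases h with ⟨i, x, rfl⟩ | ⟨i, x, hw⟩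
  · -- insertion
    by_cases hi : i ≤ u.length
    · exact ⟨u.insertIdx i x, v, insertIdx_append_left u v i x hi,
        Or.inl ⟨Or.inl ⟨i, x, rfl⟩, rfl⟩⟩
    · exact ⟨u, v.insertIdx (i - u.length) x,
        insertIdx_append_right u v i x (by omega),
        Or.inr ⟨rfl, Or.inl ⟨i - u.length, x, rfl⟩⟩⟩
  · -- deletion: u ++ v = w.insertIdx i x
    by_cases hi : i ≤ w.length
    · have hlen : w.length + 1 = u.length + v.length := by
        have := List.length_insertIdx_of_le_length (i := i) (as := w) hi x
        have := congrArg List.length hw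
        simp at this
        omega
      by_cases hu : i < u.length
      · refine ⟨w.take (u.length - 1), w.drop (u.length - 1), (List.take_append_drop _ _).symm,
          Or.inl ⟨?_, ?_⟩⟩
        all_goals {
          have hle : u.length - 1 ≤ w.length := by omega
          have hw2 : (w.take (u.length - 1) ++ w.drop (u.length - 1)).insertIdx i x = u ++ v := by
            rw [List.take_append_drop]; exact hw.symm
          rw [insertIdx_append_left _ _ i x
            (by rw [List.length_take]; omega)] at hw2
          have hlen2 : ((w.take (u.length - 1)).insertIdx i x).length = u.length := by
            rw [List.length_insertIdx_of_le_length (i := i) (as := w.take (u.length - 1)) (by rw [List.length_take]; omega) x,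
              List.length_take]
            omega
          have := List.append_inj hw2 hlen2
          first
          | exact Or.inr ⟨i, x, this.1.symm⟩
          | exact this.2.symm
        }
      · -- i ≥ u.length
        have hv : v.length ≠ 0 := by
          intro h0
          omega
        refine ⟨w.take u.length, w.drop u.length, (List.take_append_drop _ _).symm,
          Or.inr ⟨?_, ?_⟩⟩
        all_goals {
          have hle : u.length ≤ w.length := by omega
          have hw2 : (w.take u.length ++ w.drop u.length).insertIdx i x = u ++ v := by
            rw [List.take_append_drop]; exact hw.symm
          rw [insertIdx_append_right _ _ i x
            (by rw [List.length_take]; omega)] at hw2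
          have hlen2 : (w.take u.length).length = u.length := by
            rw [List.length_take]; omega
          have := List.append_inj hw2 hlen2
          first
          | exact this.1.symm
          | exact Or.inr ⟨i - (w.take u.length).length, x, this.2.symm⟩
        }
    · -- no-op insertion
      rw [List.insertIdx_of_length_lt (l := w) (x := x) (i := i) (by omega)] at hw
      refine ⟨u, v, hw.symm, Or.inr ⟨rfl, Or.inr ⟨v.length + 1, x, ?_⟩⟩⟩
      rw [List.insertIdx_of_length_lt (l := v) (x := x) (by omega)]

lemma editDist_le_one_of_editStep {a b : List α} (h : EditStep a b) : editDist a b ≤ 1 :=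
  editDist_le_of_pathN (pathN_of_editStep h)

/-- Splitting a path across a concatenation boundary. -/
lemma pathN_split {u₀ v₀ : List α} :
    ∀ {N : ℕ} {w : List α}, PathN N (u₀ ++ v₀) w →
      ∃ u v, w = u ++ v ∧ editDist u₀ u + editDist v₀ v ≤ N := by
  intro N
  induction N with
  | zero =>
    intro w h
    obtain ⟨f, f0, fN, _⟩ := h
    refine ⟨u₀, v₀, (f0.symm.trans fN).symm, ?_⟩
    have h1 := editDist_le_of_pathN (pathN_refl u₀)
    have h2 := editDist_le_of_pathN (pathN_refl v₀)
    omega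
  | succ N ih =>
    intro w h
    obtain ⟨w', h1, h2⟩ := pathN_succ_iff.mp h
    obtain ⟨u, v, rfl, hsum⟩ := ih h1
    obtain ⟨u', v', rfl, hcase⟩ := editStep_split h2
    rcases hcase with ⟨hs, rfl⟩ | ⟨rfl, hs⟩
    · refine ⟨u', v, rfl, ?_⟩
      have := editDist_triangle u₀ u u'
      have := editDist_le_one_of_editStep hs
      omega
    · refine ⟨u, v', rfl, ?_⟩
      have := editDist_triangle v₀ v v'
      have := editDist_le_one_of_editStep hs
      omega

end Aux

/-- `d_E(ac, bd) ≥ max{d_E(a,b), d_E(c,d)}`. -/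
theorem max_editDist_le_editDist_append (q n m : ℕ) (a b c d : List (Fin q))
    (ha : a.length = n) (hb : b.length = n) (hc : c.length = m) (hd : d.length = m) :
    max (editDist a b) (editDist c d) ≤ editDist (a ++ c) (b ++ d) := by
  obtain ⟨u, v, huv, hsum⟩ := pathN_split (pathN_editDist (a ++ c) (b ++ d))
  have hlen : u.length + v.length = n + m := by
    have := congrArg List.length huv
    simp at this
    omega
  have hau : u.length ≤ n + editDist a u ∧ n ≤ u.length + editDist a u := by
    have := length_pathN (pathN_editDist a u)
    omega
  have hcv : v.length ≤ m + editDist c v ∧ m ≤ v.length + editDist c v := by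
    have := length_pathN (pathN_editDist c v)
    omega
  refine max_le ?_ ?_
  · -- editDist a b ≤ D
    have hub : editDist u b ≤ editDist c v := by
      by_cases h : u.length ≤ n
      · -- u is a prefix of b
        have hpre : u = b.take u.length := by
          conv_lhs => rw [show u = (u ++ v).take u.length by simp, ← huv]
          rw [List.take_append_of_le_length (by omega)]
        have hb2 : b = u ++ b.drop u.length := by
          conv_lhs => rw [← List.take_append_drop u.length b]
          rw [← hpre]
        have hp := editDist_le_of_pathN (pathN_append_right u (b.drop u.length))
        rw [← hb2, List.length_drop] at hp
        omega
      · -- b is a prefix of u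
        have hpre : b = u.take n := by
          conv_lhs => rw [show b = (b ++ d).take n by simp [hb], huv]
          rw [List.take_append_of_le_length (by omega)]
        have hu2 : u = b ++ u.drop n := by
          conv_lhs => rw [← List.take_append_drop n u]
          rw [← hpre]
        have hp := editDist_le_of_pathN (pathN_symm (pathN_append_right b (u.drop n)))
        rw [← hu2, List.length_drop] at hp
        omega
    calc editDist a b ≤ editDist a u + editDist u b := editDist_triangle a u b
      _ ≤ editDist a u + editDist c v := by omega
      _ ≤ _ := hsum
  · -- editDist c d ≤ D
    have hvd : editDist v d ≤ editDist a u := by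
      by_cases h : v.length ≤ m
      · -- v is a suffix of d
        have hpre : v = d.drop (u.length - n) := by
          have h2 := List.drop_length_add_append (l₁ := b) (l₂ := d) (u.length - n)
          rw [show b.length + (u.length - n) = u.length by omega] at h2
          conv_lhs => rw [show v = (u ++ v).drop u.length by simp, ← huv]
          rw [h2]
        have hd2 : d = d.take (u.length - n) ++ v := by
          conv_lhs => rw [← List.take_append_drop (u.length - n) d]
          rw [← hpre]
        have hp := editDist_le_of_pathN (pathN_prepend v (d.take (u.length - n)))
        rw [← hd2, List.length_take] at hp
        omega
      · -- d is a suffix of v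
        have hpre : v = b.drop u.length ++ d := by
          conv_lhs => rw [show v = (u ++ v).drop u.length by simp, ← huv]
          rw [List.drop_append_of_le_length (by omega)]
        have hp := editDist_le_of_pathN (pathN_symm (pathN_prepend d (b.drop u.length)))
        rw [← hpre, List.length_drop] at hp
        omega
    calc editDist c d ≤ editDist c v + editDist v d := editDist_triangle c v d
      _ ≤ editDist c v + editDist a u := by omega
      _ ≤ _ := by omega
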